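/- A countable direct sum of chains D contains an increasing and unbounded (in size) sequence of components if and only if D ⊕ D_id is equimorphic with D, where D_id = ⊕_{n<ω} C^n is the direct sum of one chain of each finite size. -/

import Mathlib

open Cardinal

/-- Two preorders are equimorphic (siblings) if each order-embeds into the other. -/
def Equimorphic (α : Type*) (β : Type*) [Preorder α] [Preorder β] : Prop :=
  Nonempty (α ↪o β) ∧ Nonempty (β ↪o α)

/-- The setoid identifying order-isomorphic equimorphic substructures. -/
def sibSetoid (α : Type*) [Preorder α] : Setoid {S : Set α // Equimorphic S α} :=
  ⟨fun S T => Nonempty ((S : Set α) ≃o (T : Set α)),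
    ⟨fun _ => ⟨OrderIso.refl _⟩, fun ⟨e⟩ => ⟨e.symm⟩, fun ⟨e⟩ ⟨f⟩ => ⟨e.trans f⟩⟩⟩

/-- The sibling number of a structure: the number of isomorphism classes of
substructures equimorphic to it (every sibling is isomorphic to such a substructure). -/
noncomputable def sibNumber (α : Type*) [Preorder α] : Cardinal :=
  #(Quotient (sibSetoid α))

open Cardinal Function

section Aux

lemma sigma_eta' {ι : Type*} {α : ι → Type*} (s : Σ i, α i) {j : ι} (h : s.1 = j) :
    (⟨j, h ▸ s.2⟩ : Σ i, α i) = s := by subst h; rfl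

lemma sigma_le_fst {ι : Type*} {α : ι → Type*} [∀ i, LE (α i)] {a b : Σ i, α i}
    (h : a ≤ b) : a.1 = b.1 := (Sigma.le_def.1 h).1

lemma sigma_comparable {ι : Type*} {α : ι → Type*} [∀ i, LinearOrder (α i)]
    {a b : Σ i, α i} (h : a.1 = b.1) : a ≤ b ∨ b ≤ a := by
  obtain ⟨i, x⟩ := a; obtain ⟨j, y⟩ := b
  cases h
  rcases le_total x y with h | h
  · exact Or.inl (Sigma.mk_le_mk_iff.2 h)
  · exact Or.inr (Sigma.mk_le_mk_iff.2 h)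

/-- Build an order embedding of sigma (disjoint sum) orders from an injective index map
and fiberwise embeddings. -/
def sigmaOrderEmb {ι κ : Type*} {α : ι → Type*} {β : κ → Type*}
    [∀ i, Preorder (α i)] [∀ k, Preorder (β k)]
    (φ : ι → κ) (hφ : Function.Injective φ) (e : ∀ i, α i ↪o β (φ i)) :
    (Σ i, α i) ↪o (Σ k, β k) where
  toFun x := ⟨φ x.1, e x.1 x.2⟩
  inj' := by
    rintro ⟨i, a⟩ ⟨j, b⟩ h
    rw [Sigma.mk.inj_iff] at h
    obtain ⟨h1, h2⟩ := h
    obtain rfl := hφ h1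
    obtain rfl := (e i).injective (eq_of_heq h2)
    rfl
  map_rel_iff' := by
    rintro ⟨i, a⟩ ⟨j, b⟩
    constructor
    · intro h
      obtain ⟨h1, h2⟩ := Sigma.le_def.1 h
      obtain rfl := hφ h1
      exact Sigma.mk_le_mk_iff.2 ((e i).le_iff_le.1 h2)
    · rintro ⟨_, _, _, hab⟩
      exact Sigma.mk_le_mk_iff.2 ((e _).monotone hab)

/-- Build an order embedding of a disjoint sum of two sigma orders into a sigma order. -/
def sumSigmaOrderEmb {ι κ μ : Type*} {α : ι → Type*} {β : κ → Type*} {γ : μ → Type*}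
    [∀ i, Preorder (α i)] [∀ k, Preorder (β k)] [∀ m, Preorder (γ m)]
    (φ : ι → μ) (ψ : κ → μ) (hφ : Function.Injective φ) (hψ : Function.Injective ψ)
    (hd : ∀ i k, φ i ≠ ψ k)
    (e : ∀ i, α i ↪o γ (φ i)) (f : ∀ k, β k ↪o γ (ψ k)) :
    ((Σ i, α i) ⊕ (Σ k, β k)) ↪o (Σ m, γ m) where
  toFun x := Sum.elim (fun y => ⟨φ y.1, e y.1 y.2⟩) (fun y => ⟨ψ y.1, f y.1 y.2⟩) x
  inj' := by
    have hA := (sigmaOrderEmb φ hφ e).injective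
    have hB := (sigmaOrderEmb ψ hψ f).injective
    rintro (a | a) (b | b) h
    · exact congrArg Sum.inl (hA h)
    · exact absurd (congrArg Sigma.fst h) (hd a.1 b.1)
    · exact absurd (congrArg Sigma.fst h).symm (hd b.1 a.1)
    · exact congrArg Sum.inr (hB h)
  map_rel_iff' := by
    rintro (a | a) (b | b)
    · show (sigmaOrderEmb φ hφ e) a ≤ (sigmaOrderEmb φ hφ e) b ↔ _
      rw [(sigmaOrderEmb φ hφ e).le_iff_le, Sum.inl_le_inl_iff]
    · constructor
      · intro h
        exact absurd (sigma_le_fst h) (hd a.1 b.1)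
      · intro h
        exact absurd h Sum.not_inl_le_inr
    · constructor
      · intro h
        exact absurd (sigma_le_fst h).symm (hd b.1 a.1)
      · intro h
        exact absurd h Sum.not_inr_le_inl
    · show (sigmaOrderEmb ψ hψ f) a ≤ (sigmaOrderEmb ψ hψ f) b ↔ _
      rw [(sigmaOrderEmb ψ hψ f).le_iff_le, Sum.inr_le_inr_iff]

lemma exists_fin_orderEmb {α : Type*} [LinearOrder α] {n : ℕ} (h : (n : Cardinal) ≤ #α) :
    Nonempty (Fin n ↪o α) := by
  classical
  cases finite_or_infinite α with
  | inl hf =>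
    haveI := Fintype.ofFinite α
    have hn : n ≤ Fintype.card α := by
      rwa [Cardinal.mk_fintype, Nat.cast_le] at h
    exact ⟨(Fin.castLEOrderEmb hn).trans (monoEquivOfFin α rfl).toOrderEmbedding⟩
  | inr hi =>
    obtain ⟨s, hs⟩ := Infinite.exists_subset_card_eq α n
    exact ⟨s.orderEmbOfFin hs⟩

lemma fiber_emb {ι κ : Type*} {α : ι → Type*} {β : κ → Type*}
    [∀ i, PartialOrder (α i)] [∀ k, Preorder (β k)]
    (F : (Σ i, α i) ↪o (Σ k, β k)) (i : ι) (j : κ)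
    (hj : ∀ x : α i, (F ⟨i, x⟩).1 = j) : Nonempty (α i ↪o β j) := by
  have heta : ∀ x : α i, (⟨j, (hj x) ▸ (F ⟨i, x⟩).2⟩ : Σ k, β k) = F ⟨i, x⟩ :=
    fun x => sigma_eta' _ _
  refine ⟨OrderEmbedding.ofMapLEIff (fun x => (hj x) ▸ (F ⟨i, x⟩).2) ?_⟩
  intro x y
  rw [← Sigma.mk_le_mk_iff, heta x, heta y, F.le_iff_le, Sigma.mk_le_mk_iff]

/-- Any sigma-order embedding induces an injective map on components together with
fiberwise embeddings. -/
lemma key_components {ι κ : Type*} {α : ι → Type*} {β : κ → Type*}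
    [∀ i, LinearOrder (α i)] [∀ k, LinearOrder (β k)] [∀ i, Nonempty (α i)]
    (F : (Σ i, α i) ↪o (Σ k, β k)) :
    ∃ t : ι → κ, Function.Injective t ∧ (∀ i, Nonempty (α i ↪o β (t i))) ∧
      ∀ i (x : α i), (F ⟨i, x⟩).1 = t i := by
  have hfst : ∀ i (x y : α i), (F ⟨i, x⟩).1 = (F ⟨i, y⟩).1 := by
    intro i x y
    rcases le_total x y with h | h
    · exact sigma_le_fst (F.monotone (Sigma.mk_le_mk_iff.2 h))
    · exact (sigma_le_fst (F.monotone (Sigma.mk_le_mk_iff.2 h))).symm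
  refine ⟨fun i => (F ⟨i, Classical.arbitrary _⟩).1, ?_, ?_, fun i x => hfst i x _⟩
  · intro i j hij
    rcases sigma_comparable (a := F ⟨i, Classical.arbitrary _⟩)
        (b := F ⟨j, Classical.arbitrary _⟩) hij with h | h
    · exact (Sigma.le_def.1 (F.le_iff_le.1 h)).1
    · exact ((Sigma.le_def.1 (F.le_iff_le.1 h)).1).symm
  · intro i
    exact fiber_emb F i _ (fun x => hfst i x (Classical.arbitrary _))

lemma orbit_inj {α : Type*} {f : α → α} (hf : Function.Injective f) {x : α}
    (hx : ∀ y, f y ≠ x) : Function.Injective fun k => f^[k] x := by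
  have key : ∀ a b : ℕ, f^[a] x = f^[a + b] x → b = 0 := by
    intro a
    induction a with
    | zero =>
      intro b h
      cases b with
      | zero => rfl
      | succ b =>
        rw [Nat.zero_add, Function.iterate_succ_apply'] at h
        exact absurd h.symm (hx _)
    | succ a ih =>
      intro b h
      rw [Function.iterate_succ_apply', show a + 1 + b = (a + b) + 1 by omega,
        Function.iterate_succ_apply'] at h
      exact ih b (hf h)
  intro a b h
  simp only at h
  rcases le_total a b with hab | hab
  · obtain ⟨c, rfl⟩ := Nat.exists_eq_add_of_le hab
    have := key a c h
    omega
  · obtain ⟨c, rfl⟩ := Nat.exists_eq_add_of_le hab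
    have := key b c h.symm
    omega

lemma emb_of_card_le {α β : Type*} [LinearOrder α] [LinearOrder β] [Finite α] [Finite β]
    (h : Nat.card α ≤ Nat.card β) : Nonempty (α ↪o β) := by
  haveI := Fintype.ofFinite α
  haveI := Fintype.ofFinite β
  refine ⟨((monoEquivOfFin α rfl).symm.toOrderEmbedding.trans
    ((Fin.castLEOrderEmb ?_).trans (monoEquivOfFin β rfl).toOrderEmbedding))⟩
  simpa [Nat.card_eq_fintype_card] using h

def inlOrderEmb (α β : Type*) [Preorder α] [Preorder β] : α ↪o (α ⊕ β) :=
  ⟨⟨Sum.inl, Sum.inl_injective⟩, Sum.inl_le_inl_iff⟩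

end Aux
def inrOrderEmb (α β : Type*) [Preorder α] [Preorder β] : β ↪o (α ⊕ β) :=
  ⟨⟨Sum.inr, Sum.inr_injective⟩, Sum.inr_le_inr_iff⟩

lemma exists_shift {ι : Type*} (f : ℕ → ι) (hf : Function.Injective f) :
    ∃ φ : ι → ι, Function.Injective φ ∧
      (∀ i, φ i = i ∨ ∃ k, i = f k ∧ φ i = f (2 * k)) ∧
      (∀ n i, φ i ≠ f (2 * n + 1)) := by
  classical
  refine ⟨fun i => if hi : ∃ k, f k = i then f (2 * hi.choose) else i, ?_, ?_, ?_⟩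
  · intro a b hab
    dsimp only at hab
    by_cases ha : ∃ k, f k = a <;> by_cases hb : ∃ k, f k = b
    · rw [dif_pos ha, dif_pos hb] at hab
      have h1 := hf hab
      have h2 : ha.choose = hb.choose := by omega
      rw [← ha.choose_spec, ← hb.choose_spec, h2]
    · rw [dif_pos ha, dif_neg hb] at hab
      exact absurd ⟨_, hab⟩ hb
    · rw [dif_neg ha, dif_pos hb] at hab
      exact absurd ⟨_, hab.symm⟩ ha
    · rwa [dif_neg ha, dif_neg hb] at hab
  · intro i
    by_cases hi : ∃ k, f k = i
    · right
      exact ⟨hi.choose, hi.choose_spec.symm, by dsimp only; rw [dif_pos hi]⟩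
    · left
      dsimp only
      rw [dif_neg hi]
  · intro n i heq
    dsimp only at heq
    by_cases hi : ∃ k, f k = i
    · rw [dif_pos hi] at heq
      have := hf heq
      omega
    · rw [dif_neg hi] at heq
      exact hi ⟨_, heq.symm⟩

lemma exists_good_subseq (c : ℕ → Cardinal) (hmono : ∀ m n, m ≤ n → c m ≤ c n)
    (hub : ∀ M : ℕ, ∃ n, (M : Cardinal) < c n) :
    ∃ h : ℕ → ℕ, StrictMono h ∧ ∀ k : ℕ, (k : Cardinal) < c (h k) := by
  classical
  choose u hu using hub
  refine ⟨fun k => Nat.rec (u 0) (fun k ih => max (ih + 1) (u (k + 1))) k, ?_, ?_⟩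
  · apply strictMono_nat_of_lt_succ
    intro k
    exact lt_of_lt_of_le (Nat.lt_succ_self _) (le_max_left _ _)
  · intro k
    cases k with
    | zero => exact hu 0
    | succ k => exact lt_of_lt_of_le (hu (k + 1)) (hmono _ _ (le_max_right _ _))

theorem increasing_unbounded_iff_absorbs_Did (I : Type) (C : I → Type)
    [∀ i, LinearOrder (C i)] [∀ i, Nonempty (C i)]
    [Countable I] [∀ i, Countable (C i)] :
    (∃ g : ℕ → I, Function.Injective g ∧
        (∀ n, Nonempty (C (g n) ↪o C (g (n + 1)))) ∧
        ∀ M : ℕ, ∃ n, (M : Cardinal) < #(C (g n))) ↔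
      Equimorphic ((Σ i, C i) ⊕ (Σ n : ℕ, Fin (n + 1))) (Σ i, C i) := by
  constructor
  · rintro ⟨g, hginj, hgemb, hgub⟩
    classical
    have embNat : ∀ m n, m ≤ n → Nonempty (C (g m) ↪o C (g n)) := by
      intro m n hmn
      induction n, hmn using Nat.le_induction with
      | base => exact ⟨(OrderIso.refl _).toOrderEmbedding⟩
      | succ n hmn ih => exact ⟨ih.some.trans (hgemb n).some⟩
    have cardMono : ∀ m n, m ≤ n → #(C (g m)) ≤ #(C (g n)) := fun m n hmn =>
      Cardinal.mk_le_of_injective (embNat m n hmn).some.injective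
    obtain ⟨h, hmono, hcard⟩ := exists_good_subseq (fun n => #(C (g n)))
      (fun m n hmn => cardMono m n hmn) hgub
    have hghinj : Function.Injective (fun k => g (h k)) :=
      fun a b hab => hmono.injective (hginj hab)
    obtain ⟨φ, hφinj, hφspec, hφdisj⟩ := exists_shift (fun k => g (h k)) hghinj
    have eφ : ∀ i, Nonempty (C i ↪o C (φ i)) := by
      intro i
      rcases hφspec i with hi | ⟨k, rfl, hk⟩
      · rw [hi]
        exact ⟨(OrderIso.refl _).toOrderEmbedding⟩
      · rw [hk]
        exact embNat (h k) (h (2 * k)) (hmono.monotone (by omega))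
    have hψinj : Function.Injective (fun n => g (h (2 * n + 1))) := by
      intro a b hab
      have : 2 * a + 1 = 2 * b + 1 := hghinj hab
      omega
    have fψ : ∀ n, Nonempty (Fin (n + 1) ↪o C (g (h (2 * n + 1)))) := by
      intro n
      apply exists_fin_orderEmb
      have h1 : ((2 * n + 1 : ℕ) : Cardinal) < #(C (g (h (2 * n + 1)))) := hcard _
      refine le_trans ?_ h1.le
      exact Nat.cast_le.mpr (by omega)
    exact ⟨⟨sumSigmaOrderEmb φ (fun n => g (h (2 * n + 1))) hφinj hψinj
        (fun i k => hφdisj k i) (fun i => (eφ i).some) (fun n => (fψ n).some)⟩,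
      ⟨inlOrderEmb _ _⟩⟩
  · rintro ⟨⟨F⟩, -⟩
    classical
    obtain ⟨t, htinj, htemb, htfst⟩ := key_components ((inlOrderEmb _ _).trans F)
    obtain ⟨w, hwinj, hwemb, hwfst⟩ := key_components ((inrOrderEmb _ _).trans F)
    have hdisj : ∀ j n, t j ≠ w n := by
      intro j n heq
      have h1 : (F (Sum.inl ⟨j, Classical.arbitrary _⟩)).1 =
          (F (Sum.inr (⟨n, Classical.arbitrary _⟩ : Σ n : ℕ, Fin (n + 1)))).1 :=
        (htfst j (Classical.arbitrary _)).trans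
          (heq.trans (hwfst n (Classical.arbitrary _)).symm)
      rcases sigma_comparable h1 with hle | hle
      · exact Sum.not_inl_le_inr (F.le_iff_le.1 hle)
      · exact Sum.not_inr_le_inl (F.le_iff_le.1 hle)
    by_cases hinf : ∃ N, Infinite (C (w N))
    · obtain ⟨N, hN⟩ := hinf
      haveI := hN
      refine ⟨fun k => t^[k] (w N), ?_, ?_, ?_⟩
      · exact orbit_inj htinj (fun y hy => hdisj y N hy)
      · intro n
        show Nonempty (C (t^[n] (w N)) ↪o C (t^[n + 1] (w N)))
        rw [Function.iterate_succ_apply']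
        exact htemb _
      · intro M
        refine ⟨0, ?_⟩
        show (M : Cardinal) < #(C (w N))
        exact lt_of_lt_of_le (Cardinal.nat_lt_aleph0 M) (Cardinal.aleph0_le_mk _)
    · push_neg at hinf
      haveI hfin : ∀ n, Finite (C (w n)) := fun n => hinf n
      have hcn : ∀ n, n + 1 ≤ Nat.card (C (w n)) := by
        intro n
        obtain ⟨e⟩ := hwemb n
        have := Nat.card_le_card_of_injective e e.injective
        simpa using this
      obtain ⟨s, hs0, hsstep⟩ : ∃ s : ℕ → ℕ, s 0 = 0 ∧
          ∀ k, s (k + 1) = Nat.card (C (w (s k))) :=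
        ⟨fun k => Nat.rec 0 (fun _ ih => Nat.card (C (w ih))) k, rfl, fun _ => rfl⟩
      have hslt : ∀ k, s k < s (k + 1) := by
        intro k
        rw [hsstep]
        have := hcn (s k)
        omega
      have hsmono : StrictMono s := strictMono_nat_of_lt_succ hslt
      refine ⟨fun k => w (s k), hwinj.comp hsmono.injective, ?_, ?_⟩
      · intro k
        show Nonempty (C (w (s k)) ↪o C (w (s (k + 1))))
        have e1 : Nat.card (C (w (s k))) = s (k + 1) := (hsstep k).symm
        have e2 : s (k + 1) + 1 ≤ Nat.card (C (w (s (k + 1)))) := hcn _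
        exact emb_of_card_le (by omega)
      · intro M
        refine ⟨M, ?_⟩
        show (M : Cardinal) < #(C (w (s M)))
        haveI := Fintype.ofFinite (C (w (s M)))
        rw [Cardinal.mk_fintype, Nat.cast_lt]
        have h1 : M ≤ s M := hsmono.le_apply
        have h2 := hcn (s M)
        rw [Nat.card_eq_fintype_card] at h2
        omega
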